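/- For every n ≥ 3, the cycle C_n on n vertices satisfies γ_gr^L(C_n) = n − 1. -/

import Mathlib

/-- A list of distinct vertices `s = (v_1, …, v_k)` is an *L-sequence* of `G` if for each `i`,
`N[v_i] \ ⋃_{j<i} N(v_j) ≠ ∅`, i.e. there is a vertex `w` in the closed neighborhood of `v_i`
that lies in no open neighborhood `N(v_j)` for `j < i`. -/
def IsLSeq {V : Type*} (G : SimpleGraph V) (s : List V) : Prop :=
  s.Nodup ∧ ∀ i : Fin s.length, ∃ w : V,
    (w = s.get i ∨ G.Adj (s.get i) w) ∧
    ∀ j : Fin s.length, j < i → ¬ G.Adj (s.get j) w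

/-- The L-Grundy domination number of `G`: the maximum length of an L-sequence of `G`. -/
noncomputable def LGrundy {V : Type*} [Fintype V] (G : SimpleGraph V) : ℕ :=
  sSup {k : ℕ | ∃ s : List V, IsLSeq G s ∧ s.length = k}

lemma modone (n x : ℕ) (hn : 3 ≤ n) (h : x < 2*n) : x % n = 1 ↔ (x = 1 ∨ x = n+1) := by
  rcases Nat.lt_or_ge x n with h1 | h1
  · rw [Nat.mod_eq_of_lt h1]; constructor <;> (intro; omega)
  · rw [Nat.mod_eq_sub_mod h1, Nat.mod_eq_of_lt (show x - n < n by omega)]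
    constructor <;> (intro; omega)

lemma adjiff {n : ℕ} (hn : 3 ≤ n) (u v : Fin n) :
    (SimpleGraph.cycleGraph n).Adj u v ↔
      (u.val + 1 = v.val ∨ v.val + 1 = u.val ∨ (u.val + 1 = n ∧ v.val = 0) ∨
        (v.val + 1 = n ∧ u.val = 0)) := by
  obtain ⟨a, ha⟩ := u; obtain ⟨b, hb⟩ := v
  rw [SimpleGraph.cycleGraph_adj', Fin.sub_def, Fin.sub_def]
  show (n - b + a) % n = 1 ∨ (n - a + b) % n = 1 ↔ _
  rw [modone n _ hn (by omega), modone n _ hn (by omega)]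
  simp only [Fin.val_mk]
  constructor <;> (intro; omega)

def gfun (n i : ℕ) : ℕ := if i < n - 3 then i else if i = n - 3 then n - 2 else n - 3

def wfun (n i : ℕ) : ℕ := if i < n - 3 then i + 1 else n - 2

def Lseq (n : ℕ) (hn : 3 ≤ n) : List (Fin n) :=
  (List.range (n-1)).map fun i => ⟨gfun n i, by unfold gfun; split_ifs <;> omega⟩

lemma Lseq_length (n : ℕ) (hn : 3 ≤ n) : (Lseq n hn).length = n - 1 := by
  simp [Lseq]

lemma Lseq_get (n : ℕ) (hn : 3 ≤ n) (j : Fin (Lseq n hn).length) :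
    ((Lseq n hn).get j).val = gfun n j.val := by
  rw [List.get_eq_getElem]; simp [Lseq]

lemma Lseq_isLSeq (n : ℕ) (hn : 3 ≤ n) : IsLSeq (SimpleGraph.cycleGraph n) (Lseq n hn) := by
  constructor
  · apply List.Nodup.map_on _ List.nodup_range
    intro x hx y hy hxy
    rw [List.mem_range] at hx hy
    have : gfun n x = gfun n y := congrArg Fin.val hxy
    unfold gfun at this; split_ifs at this <;> omega
  · intro i
    have hL := Lseq_length n hn
    have hi : i.val < n - 1 := by have := i.isLt; omega
    refine ⟨⟨wfun n i.val, by unfold wfun; split_ifs <;> omega⟩, ?_, ?_⟩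
    · rcases Nat.lt_or_ge i.val (n-3) with h | h
      · right
        rw [adjiff hn, Lseq_get]
        simp only [Fin.val_mk]
        unfold gfun wfun; split_ifs <;> omega
      · rcases Nat.lt_or_ge i.val (n-2) with h2 | h2
        · left
          apply Fin.ext
          rw [Lseq_get]
          simp only [Fin.val_mk]
          unfold gfun wfun; split_ifs <;> omega
        · right
          rw [adjiff hn, Lseq_get]
          simp only [Fin.val_mk]
          unfold gfun wfun; split_ifs <;> omega
    · intro j hj
      have hji : j.val < i.val := hj
      rw [adjiff hn, Lseq_get]
      simp only [Fin.val_mk]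
      unfold gfun wfun; split_ifs <;> (intro hc; omega)

lemma lseq_le (n : ℕ) (hn : 3 ≤ n) (s : List (Fin n))
    (hs : IsLSeq (SimpleGraph.cycleGraph n) s) : s.length ≤ n - 1 := by
  by_contra hlen
  push_neg at hlen
  have hcard : s.length ≤ n := by
    simpa using hs.1.length_le_card
  have hlen' : s.length = n := by omega
  have hmem : ∀ v : Fin n, v ∈ s := by
    intro v
    rw [← List.mem_toFinset]
    have : s.toFinset.card = n := by rw [List.toFinset_card_of_nodup hs.1, hlen']
    have : s.toFinset = Finset.univ := Finset.eq_univ_of_card _ (by simp [this])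
    simp [this]
  set i : Fin s.length := ⟨n - 1, by omega⟩ with hidef
  obtain ⟨w, hw1, hw2⟩ := hs.2 i
  -- two neighbors of w
  have hwlt := w.isLt
  set u1 : Fin n := if h : w.val + 1 < n then ⟨w.val + 1, h⟩ else ⟨0, by omega⟩ with hu1
  set u2 : Fin n := if h : w.val = 0 then ⟨n - 1, by omega⟩ else ⟨w.val - 1, by omega⟩ with hu2
  have hadj1 : (SimpleGraph.cycleGraph n).Adj u1 w := by
    rw [adjiff hn]
    rw [hu1]; split_ifs with h <;> simp <;> omega
  have hadj2 : (SimpleGraph.cycleGraph n).Adj u2 w := by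
    rw [adjiff hn]
    rw [hu2]; split_ifs with h <;> simp <;> omega
  have hne : u1 ≠ u2 := by
    rw [hu1, hu2]
    split_ifs <;> (intro hc; have := congrArg Fin.val hc; simp at this; omega)
  obtain ⟨j1, hj1⟩ := List.mem_iff_get.mp (hmem u1)
  obtain ⟨j2, hj2⟩ := List.mem_iff_get.mp (hmem u2)
  have hjne : j1 ≠ j2 := by
    intro hc; rw [hc, hj2] at hj1; exact hne hj1.symm
  have hb1 : j1.val ≤ n - 1 := by have := j1.isLt; omega
  have hb2 : j2.val ≤ n - 1 := by have := j2.isLt; omega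
  rcases Nat.lt_or_ge j1.val (n-1) with h | h
  · exact hw2 j1 (by rw [Fin.lt_def]; exact h) (by rw [hj1]; exact hadj1)
  · have : j2.val < n - 1 := by
      rcases Nat.lt_or_ge j2.val (n-1) with h' | h'
      · exact h'
      · exfalso; exact hjne (Fin.ext (by omega))
    exact hw2 j2 (by rw [Fin.lt_def]; exact this) (by rw [hj2]; exact hadj2)

/-- For every `n ≥ 3`, the cycle `C_n` satisfies `γ_gr^L(C_n) = n − 1`. -/
theorem lgrundy_cycleGraph (n : ℕ) (hn : 3 ≤ n) :
    LGrundy (SimpleGraph.cycleGraph n) = n - 1 := by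
  have hmem : (n - 1) ∈ {k : ℕ | ∃ s : List (Fin n), IsLSeq (SimpleGraph.cycleGraph n) s ∧ s.length = k} :=
    ⟨Lseq n hn, Lseq_isLSeq n hn, Lseq_length n hn⟩
  have hub : ∀ k ∈ {k : ℕ | ∃ s : List (Fin n), IsLSeq (SimpleGraph.cycleGraph n) s ∧ s.length = k}, k ≤ n - 1 := by
    rintro k ⟨s, hs, rfl⟩
    exact lseq_le n hn s hs
  exact le_antisymm (csSup_le ⟨n-1, hmem⟩ hub) (le_csSup ⟨n-1, hub⟩ hmem)
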